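/- For every n ≥ 3, the ring homomorphism GW(ℤ/2^{n+1}) → GW(ℤ/2ⁿ) induced by the canonical projection ℤ/2^{n+1} → ℤ/2ⁿ (sending [a] to [ā], where ā is the image of the unit a) is a ring isomorphism. -/

import Mathlib

noncomputable section

/-- The subgroup of squares of units of a commutative ring. -/
def squareUnits (R : Type) [CommRing R] : Subgroup Rˣ :=
  (powMonoidHom 2 : Rˣ →* Rˣ).range

/-- The group of square classes `Rˣ/(Rˣ)²`. -/
def SqCl (R : Type) [CommRing R] : Type := Rˣ ⧸ squareUnits R

instance (R : Type) [CommRing R] : CommGroup (SqCl R) :=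
  QuotientGroup.Quotient.commGroup (squareUnits R)

/-- The square class `[a]` of a unit `a`. -/
def cls {R : Type} [CommRing R] (a : Rˣ) : SqCl R := QuotientGroup.mk a

/-- The group ring `ℤ[Rˣ/(Rˣ)²]`. -/
abbrev GRing (R : Type) [CommRing R] := MonoidAlgebra ℤ (SqCl R)

/-- The generator `[a]` of the group ring, for a unit `a`. -/
def gen {R : Type} [CommRing R] (a : Rˣ) : GRing R :=
  MonoidAlgebra.of ℤ (SqCl R) (cls a)

/-- The set of relations defining the Grothendieck–Witt ring of a (connected semi-)local ring:
`([a₁]+[a₂]+[a₃]+[a₄]) − ([b₁]+[b₂]+[b₃]+[b₄])` whenever there exists `P ∈ GL₄(R)` with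
`P ⬝ diag(a₁,…,a₄) ⬝ Pᵀ = diag(b₁,…,b₄)`. -/
def gwRel (R : Type) [CommRing R] : Set (GRing R) :=
  {x | ∃ (a b : Fin 4 → Rˣ) (P : Matrix (Fin 4) (Fin 4) R),
    IsUnit P.det ∧
    P * Matrix.diagonal (fun i => (a i : R)) * P.transpose =
      Matrix.diagonal (fun i => (b i : R)) ∧
    x = (∑ i, gen (a i)) - (∑ i, gen (b i))}

/-- The (symmetric) Grothendieck–Witt ring of `R`, presented à la Knebusch–Rosenberg–Ware. -/
abbrev GW (R : Type) [CommRing R] := GRing R ⧸ Ideal.span (gwRel R)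

/-- The class `[a] ∈ GW(R)` of a unit `a`. -/
def gw {R : Type} [CommRing R] (a : Rˣ) : GW R :=
  Ideal.Quotient.mk (Ideal.span (gwRel R)) (gen a)

/-- The (symmetric) Witt ring of `R` : the quotient of `GW(R)` by the ideal generated by the
hyperbolic element `[1] + [-1]`. -/
abbrev Wr (R : Type) [CommRing R] := GW R ⧸ Ideal.span {gw (R := R) 1 + gw (-1)}

/-- The class in the Witt ring of a unit `a`. -/
def wcl {R : Type} [CommRing R] (a : Rˣ) : Wr R :=
  Ideal.Quotient.mk (Ideal.span {gw (R := R) 1 + gw (-1)}) (gw a)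

namespace GWP

variable {R : Type} [CommRing R] {S : Type} [CommRing S]

lemma cls_mul (a b : Rˣ) : cls (a * b) = cls a * cls b := rfl

lemma cls_sq (a : Rˣ) : cls a * cls a = 1 := by
  have : cls (a * a) = 1 := by
    apply (QuotientGroup.eq_one_iff _).2
    exact ⟨a, by simp [powMonoidHom, sq]⟩
  simpa [cls_mul] using this

lemma cls_surjective : Function.Surjective (cls (R := R)) :=
  fun x => Quotient.exists_rep x

lemma gen_mul (a b : Rˣ) : gen (a * b) = gen a * gen b := by
  simp [gen, cls_mul]

lemma gen_sq (a : Rˣ) : gen a * gen a = 1 := by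
  rw [← gen_mul]
  show MonoidAlgebra.of ℤ (SqCl R) (cls (a*a)) = 1
  have : cls (a*a) = 1 := by rw [cls_mul]; exact cls_sq a
  rw [this, map_one]

lemma gw_sq (a : Rˣ) : gw a * gw a = 1 := by
  unfold gw; rw [← map_mul, gen_sq, map_one]

lemma gw_eq_of_cls {a b : Rˣ} (h : cls a = cls b) : gw a = gw b := by
  unfold gw gen; rw [h]

/-- a relation gives vanishing in GW -/
lemma rel_zero {a b : Fin 4 → Rˣ} (P : Matrix (Fin 4) (Fin 4) R)
    (hP : IsUnit P.det)
    (h : P * Matrix.diagonal (fun i => (a i : R)) * P.transpose =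
      Matrix.diagonal (fun i => (b i : R))) :
    (∑ i, gw (a i)) = ∑ i, gw (b i) := by
  have hmem : ((∑ i, gen (a i)) - (∑ i, gen (b i))) ∈ Ideal.span (gwRel R) :=
    Ideal.subset_span ⟨a, b, P, hP, h, rfl⟩
  have := (Ideal.Quotient.eq_zero_iff_mem).2 hmem
  rw [map_sub, sub_eq_zero] at this
  simpa [gw, map_sum] using this

section hom

variable (g : Rˣ → Sˣ)
variable (hone : cls (g 1) = 1) (hmul : ∀ u v, cls (g (u * v)) = cls (g u) * cls (g v))

/-- units-level monoid hom to square classes -/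
def qHom : Rˣ →* SqCl S where
  toFun u := cls (g u)
  map_one' := hone
  map_mul' := hmul

def qBar : SqCl R →* SqCl S :=
  QuotientGroup.lift (squareUnits R) (qHom g hone hmul) (by
    rintro x ⟨w, rfl⟩
    show cls (g (w ^ 2)) = 1
    have : (w : Rˣ) ^ 2 = w * w := sq w
    rw [this, hmul]
    exact cls_sq (g w))

/-- gw as monoid hom into units of GW S -/
def gwUnits : Sˣ →* (GW S)ˣ where
  toFun s := ⟨gw s, gw s, gw_sq s, gw_sq s⟩
  map_one' := by
    ext
    show gw 1 = 1
    unfold gw gen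
    have : cls (1 : Sˣ) = 1 := by
      apply (QuotientGroup.eq_one_iff _).2
      exact ⟨1, by simp [powMonoidHom]⟩
    rw [this, map_one, map_one]
  map_mul' u v := by
    ext
    show gw (u * v) = gw u * gw v
    unfold gw
    rw [gen_mul, map_mul]

def sqclUnits : SqCl S →* (GW S)ˣ :=
  QuotientGroup.lift (squareUnits S) gwUnits (by
    rintro x ⟨w, rfl⟩
    ext
    show gw (w ^ 2) = 1
    have : (w : Sˣ) ^ 2 = w * w := sq w
    rw [this]
    have h2 : gw (w * w) = gw w * gw w := by unfold gw; rw [gen_mul, map_mul]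
    rw [h2, gw_sq])

def sqclGW : SqCl S →* GW S := (Units.coeHom _).comp sqclUnits

lemma sqclGW_cls (s : Sˣ) : sqclGW (cls s) = gw s := rfl

/-- the big ring hom on the group ring -/
def bigHom : GRing R →+* GW S :=
  ((MonoidAlgebra.lift ℤ (GW S) (SqCl R)) (sqclGW.comp (qBar g hone hmul))).toRingHom

lemma bigHom_gen (a : Rˣ) : bigHom g hone hmul (gen a) = gw (g a) := by
  show ((MonoidAlgebra.lift ℤ (GW S) (SqCl R)) (sqclGW.comp (qBar g hone hmul)))
    (MonoidAlgebra.of ℤ (SqCl R) (cls a)) = gw (g a)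
  rw [MonoidAlgebra.lift_of]
  rfl

def descend
    (hrel : ∀ x ∈ gwRel R, bigHom g hone hmul x = 0) : GW R →+* GW S :=
  Ideal.Quotient.lift (Ideal.span (gwRel R)) (bigHom g hone hmul) (by
    intro x hx
    refine Submodule.span_induction ?_ ?_ ?_ ?_ hx
    · exact hrel
    · simp
    · intro x y _ _ hx hy; rw [map_add, hx, hy, add_zero]
    · intro r x _ hx
      rw [smul_eq_mul, map_mul, hx, mul_zero])

lemma descend_gw (hrel) (a : Rˣ) : descend g hone hmul hrel (gw a) = gw (g a) := by
  unfold descend gw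
  rw [Ideal.Quotient.lift_mk]
  exact bigHom_gen g hone hmul a

/-- extensionality for ring homs out of GW -/
lemma gwHom_ext {T : Type*} [CommRing T] (F G : GW R →+* T)
    (h : ∀ a : Rˣ, F (gw a) = G (gw a)) : F = G := by
  set mk := Ideal.Quotient.mk (Ideal.span (gwRel R)) with hmk
  have key : ∀ y : GRing R, (F.comp mk) y = (G.comp mk) y := by
    intro y
    induction y using MonoidAlgebra.induction_on with
    | of a =>
      obtain ⟨u, rfl⟩ := cls_surjective a
      exact h u
    | add f g' hf hg => simp only [map_add, hf, hg]
    | smul r f hf =>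
      simp only [zsmul_eq_mul, map_mul, map_intCast, hf]
  apply RingHom.ext; intro x
  obtain ⟨y, rfl⟩ := Ideal.Quotient.mk_surjective (I := Ideal.span (gwRel R)) x
  exact key y

end hom

end GWP

namespace Z2
open GWP

variable {n : ℕ}

abbrev Rr (n : ℕ) := ZMod (2^(n+1))
abbrev Ss (n : ℕ) := ZMod (2^n)

instance (k : ℕ) : NeZero (2^k) := ⟨pow_ne_zero _ two_ne_zero⟩

def pr (n : ℕ) : Rr n →+* Ss n := ZMod.castHom (pow_dvd_pow 2 n.le_succ) (ZMod (2^n))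

lemma pr_surj : Function.Surjective (pr n) := fun y => by
  obtain ⟨k, rfl⟩ := ZMod.natCast_zmod_surjective y
  exact ⟨(k : Rr n), map_natCast _ k⟩

lemma pow_eq_zero {m : ℕ} (h : n + 1 ≤ m) : (2 : Rr n) ^ m = 0 := by
  have h1 : ((2 ^ (n+1) : ℕ) : Rr n) = 0 := ZMod.natCast_self _
  have h2 : (2 : Rr n) ^ (n+1) = 0 := by push_cast at h1; exact h1
  calc (2 : Rr n) ^ m = 2 ^ (n+1) * 2 ^ (m - (n+1)) := by
        rw [← pow_add]; congr 1; omega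
    _ = 0 := by rw [h2, zero_mul]

lemma ker_eq {x : Rr n} (h : pr n x = 0) : ∃ y : Rr n, x = 2 ^ n * y := by
  have hx : ((x.val : ℕ) : Rr n) = x := ZMod.natCast_rightInverse x
  have h0 : ((x.val : ℕ) : Ss n) = 0 := by
    rw [← map_natCast (pr n), hx]; exact h
  obtain ⟨k, hk⟩ := (ZMod.natCast_eq_zero_iff _ _).1 h0
  exact ⟨(k : Rr n), by rw [← hx, hk]; push_cast; ring⟩

lemma isUnit_of_pr (hn : 1 ≤ n) {x : Rr n} (h : IsUnit (pr n x)) : IsUnit x := by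
  obtain ⟨u, hu⟩ := h
  obtain ⟨y, hy⟩ := pr_surj (n := n) ((u⁻¹ : (Ss n)ˣ) : Ss n)
  have h1 : pr n (x * y) = 1 := by
    rw [map_mul, ← hu, hy, ← Units.val_mul, mul_inv_cancel, Units.val_one]
  obtain ⟨t, ht⟩ := ker_eq (x := x * y - 1)
    (by rw [map_sub, h1, map_one, sub_self])
  have hxy : x * y = 1 + 2 ^ n * t := by linear_combination ht
  have hsq : (2 : Rr n) ^ n * 2 ^ n = 0 := by rw [← pow_add]; exact pow_eq_zero (by omega)
  have h2 : (x * y) * (1 - 2 ^ n * t) = 1 := by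
    rw [hxy]; linear_combination (-(t*t) : Rr n) * hsq
  exact isUnit_of_mul_isUnit_left (IsUnit.of_mul_eq_one _ h2)

noncomputable def L (hn : 1 ≤ n) (s : (Ss n)ˣ) : (Rr n)ˣ :=
  (isUnit_of_pr hn (x := Function.surjInv pr_surj (s : Ss n))
    (by rw [Function.surjInv_eq (f := pr n) pr_surj]; exact s.isUnit)).unit

lemma pr_L (hn : 1 ≤ n) (s : (Ss n)ˣ) : pr n ↑(L hn s) = ↑s := by
  unfold L
  rw [IsUnit.unit_spec]
  exact Function.surjInv_eq (f := pr n) pr_surj _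

lemma sq_of_pr_one (hn : 3 ≤ n) {u : (Rr n)ˣ} (h : pr n ↑u = 1) :
    ∃ w : (Rr n)ˣ, w * w = u := by
  obtain ⟨t, ht⟩ := ker_eq (x := (u : Rr n) - 1)
    (by rw [map_sub, h, map_one, sub_self])
  have hu : (u : Rr n) = 1 + 2 ^ n * t := by linear_combination ht
  set c : Rr n := 1 + 2 ^ (n-1) * t with hc
  have e1 : (2 : Rr n) ^ (n-1) * 2 ^ (n-1) = 0 := by
    rw [← pow_add]; exact pow_eq_zero (by omega)
  have e2 : (2 : Rr n) ^ (n-1) * 2 = 2 ^ n := by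
    rw [← pow_succ]; congr 1; omega
  have hcc : c * c = (u : Rr n) := by
    rw [hc, hu]; linear_combination (t : Rr n) * e2 + (t*t : Rr n) * e1
  have hc_unit : IsUnit c := by
    refine IsUnit.of_mul_eq_one (c * ((u⁻¹ : (Rr n)ˣ) : Rr n)) ?_
    rw [← mul_assoc, hcc, ← Units.val_mul, mul_inv_cancel, Units.val_one]
  refine ⟨hc_unit.unit, ?_⟩
  ext
  rw [Units.val_mul, IsUnit.unit_spec, hcc]

lemma cls_eq_of_pr (hn : 3 ≤ n) {u v : (Rr n)ˣ} (h : pr n ↑u = pr n ↑v) :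
    cls u = cls v := by
  have h1 : pr n ↑(u⁻¹ * v) = 1 := by
    rw [Units.val_mul, map_mul, ← h, ← map_mul, ← Units.val_mul, inv_mul_cancel,
      Units.val_one, map_one]
  obtain ⟨w, hw⟩ := sq_of_pr_one hn h1
  exact (QuotientGroup.eq).2 ⟨w, by simpa [powMonoidHom, sq] using hw⟩

end Z2

namespace Z2
open GWP Matrix

variable {n : ℕ}

lemma key (hn : 3 ≤ n) (a b : Fin 4 → (Ss n)ˣ) (P : Matrix (Fin 4) (Fin 4) (Ss n))
    (hP : IsUnit P.det)
    (h : P * Matrix.diagonal (fun i => ((a i : Ss n))) * Pᵀ =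
      Matrix.diagonal (fun i => ((b i : Ss n)))) :
    ∃ P' : Matrix (Fin 4) (Fin 4) (Rr n), IsUnit P'.det ∧
      P' * Matrix.diagonal (fun i => ((L (by omega : 1 ≤ n) (a i) : (Rr n)ˣ) : Rr n)) * P'ᵀ =
        Matrix.diagonal (fun i => ((L (by omega : 1 ≤ n) (b i) : (Rr n)ˣ) : Rr n)) := by
  have hn1 : (1:ℕ) ≤ n := by omega
  set ℓ : Ss n → Rr n := Function.surjInv pr_surj with hℓ
  have hℓeq : ∀ x, pr n (ℓ x) = x := fun x => Function.surjInv_eq (f := pr n) pr_surj x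
  set Pt : Matrix (Fin 4) (Fin 4) (Rr n) := P.map ℓ with hPt
  have hmap : Pt.map (pr n) = P := by
    ext i j; simp [hPt, Matrix.map_apply, hℓeq]
  set Da : Matrix (Fin 4) (Fin 4) (Rr n) :=
    Matrix.diagonal (fun i => ((L hn1 (a i) : (Rr n)ˣ) : Rr n)) with hDa
  set Db : Matrix (Fin 4) (Fin 4) (Rr n) :=
    Matrix.diagonal (fun i => ((L hn1 (b i) : (Rr n)ˣ) : Rr n)) with hDb
  set M : Matrix (Fin 4) (Fin 4) (Rr n) := Pt * Da * Ptᵀ with hM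
  have hMmap : M.map (pr n) = Matrix.diagonal (fun i => ((b i : Ss n))) := by
    rw [hM, Matrix.map_mul (f := pr n), Matrix.map_mul (f := pr n), Matrix.transpose_map,
      hmap, hDa, Matrix.diagonal_map (map_zero _)]
    have : (fun i => pr n ((L hn1 (a i) : (Rr n)ˣ) : Rr n)) = fun i => ((a i : Ss n)) := by
      funext i; exact pr_L hn1 (a i)
    rw [this]
    exact h
  have hDbmap : Db.map (pr n) = Matrix.diagonal (fun i => ((b i : Ss n))) := by
    rw [hDb, Matrix.diagonal_map (map_zero _)]
    have : (fun i => pr n ((L hn1 (b i) : (Rr n)ˣ) : Rr n)) = fun i => ((b i : Ss n)) :=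
      funext fun i => pr_L hn1 (b i)
    rw [this]
  set F : Matrix (Fin 4) (Fin 4) (Rr n) := M - Db with hF
  have hFker : ∀ i j, pr n (F i j) = 0 := by
    intro i j
    have h1 : pr n (M i j) = pr n (Db i j) := by
      have e1 : (M.map (pr n)) i j = (Db.map (pr n)) i j := by rw [hMmap, hDbmap]
      simpa [Matrix.map_apply] using e1
    simp [hF, Matrix.sub_apply, h1]
  have hf : ∀ i j, ∃ y, F i j = 2 ^ n * y := fun i j => ker_eq (hFker i j)
  set f : Fin 4 → Fin 4 → Rr n := fun i j => (hf i j).choose with hfdef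
  have hfspec : ∀ i j, F i j = 2 ^ n * f i j := fun i j => (hf i j).choose_spec
  have hMsym : Mᵀ = M := by
    rw [hM, Matrix.transpose_mul, Matrix.transpose_mul, Matrix.transpose_transpose,
      hDa, Matrix.diagonal_transpose, Matrix.mul_assoc]
  have hFsym : ∀ i j, F j i = F i j := by
    intro i j
    have : Fᵀ = F := by
      rw [hF, Matrix.transpose_sub, hMsym, hDb, Matrix.diagonal_transpose]
    calc F j i = Fᵀ i j := rfl
      _ = F i j := by rw [this]
  set c : Rr n := 2 ^ (n-1) with hc
  have hc2 : c * 2 = 2 ^ n := by rw [hc, ← pow_succ]; congr 1; omega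
  have hcc : c * c = 0 := by rw [hc, ← pow_add]; exact pow_eq_zero (by omega)
  have hc2n : c * 2 ^ n = 0 := by rw [hc, ← pow_add]; exact pow_eq_zero (by omega)
  set Z : Matrix (Fin 4) (Fin 4) (Rr n) :=
    Matrix.of (fun i j => if i < j then -(2 * f i j) else if i = j then -(f i j) else 0) with hZ
  have hZF : c • (Z + Zᵀ) = -F := by
    ext i j
    have hZij : ∀ i j, Z i j = if i < j then -(2 * f i j) else if i = j then -(f i j) else 0 :=
      fun i j => rfl
    rcases lt_trichotomy i j with hij | hij | hij
    · have h1 : Z i j = -(2 * f i j) := by rw [hZij, if_pos hij]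
      have h2 : Z j i = 0 := by rw [hZij, if_neg (asymm hij), if_neg (ne_of_gt hij)]
      simp only [Matrix.smul_apply, Matrix.add_apply, Matrix.transpose_apply,
        Matrix.neg_apply, h1, h2, smul_eq_mul]
      linear_combination (-(f i j) : Rr n) * hc2 + hfspec i j
    · subst hij
      have h1 : Z i i = -(f i i) := by rw [hZij, if_neg (lt_irrefl i), if_pos rfl]
      simp only [Matrix.smul_apply, Matrix.add_apply, Matrix.transpose_apply,
        Matrix.neg_apply, h1, smul_eq_mul]
      linear_combination (-(f i i) : Rr n) * hc2 + hfspec i i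
    · have h1 : Z i j = 0 := by rw [hZij, if_neg (asymm hij), if_neg (ne_of_gt hij)]
      have h2 : Z j i = -(2 * f j i) := by rw [hZij, if_pos hij]
      simp only [Matrix.smul_apply, Matrix.add_apply, Matrix.transpose_apply,
        Matrix.neg_apply, h1, h2, smul_eq_mul]
      linear_combination (-(f j i) : Rr n) * hc2 + hfspec j i - hFsym i j
  set Dbinv : Matrix (Fin 4) (Fin 4) (Rr n) :=
    Matrix.diagonal (fun i => (((L hn1 (b i))⁻¹ : (Rr n)ˣ) : Rr n)) with hDbinv
  have hDbinvDb : Dbinv * Db = 1 := by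
    rw [hDbinv, hDb, Matrix.diagonal_mul_diagonal]
    have : (fun i => (((L hn1 (b i))⁻¹ : (Rr n)ˣ) : Rr n) * ((L hn1 (b i) : (Rr n)ˣ) : Rr n))
        = fun _ => 1 := by
      funext i; rw [← Units.val_mul, inv_mul_cancel, Units.val_one]
    rw [this, Matrix.diagonal_one]
  set X : Matrix (Fin 4) (Fin 4) (Rr n) := Z * Dbinv with hX
  have hXDb : X * Db = Z := by rw [hX, Matrix.mul_assoc, hDbinvDb, Matrix.mul_one]
  set N : Matrix (Fin 4) (Fin 4) (Rr n) := c • X with hN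
  have hNN : N * N = 0 := by
    rw [hN, Matrix.smul_mul, Matrix.mul_smul, smul_smul, hcc, zero_smul]
  set Q : Matrix (Fin 4) (Fin 4) (Rr n) := 1 + N with hQ
  have hQunit : IsUnit Q := by
    refine isUnit_iff_exists.2 ⟨1 - N, ?_, ?_⟩
    · rw [hQ]
      have : (1 + N) * (1 - N) = 1 - N * N := by noncomm_ring
      rw [this, hNN, sub_zero]
    · rw [hQ]
      have : (1 - N) * (1 + N) = 1 - N * N := by noncomm_ring
      rw [this, hNN, sub_zero]
  have hcF : c • F = 0 := by
    ext i j
    simp only [Matrix.smul_apply, smul_eq_mul, Matrix.zero_apply, hfspec i j]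
    rw [← mul_assoc, hc2n, zero_mul]
  have hMDbF : M = Db + F := by rw [hF]; abel
  have hNM : N * M = c • Z := by
    have e1 : X * M = Z + X * F := by rw [hMDbF, Matrix.mul_add, hXDb]
    rw [hN, Matrix.smul_mul, e1, smul_add, ← Matrix.mul_smul, hcF, Matrix.mul_zero, add_zero]
  have hMNt : M * Nᵀ = c • Zᵀ := by
    have e1 : M * Nᵀ = (N * M)ᵀ := by rw [Matrix.transpose_mul, hMsym]
    rw [e1, hNM, Matrix.transpose_smul]
  have hNMNt : N * M * Nᵀ = 0 := by
    rw [hNM, hN, Matrix.transpose_smul, Matrix.smul_mul, Matrix.mul_smul, smul_smul, hcc,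
      zero_smul]
  have hQt : Qᵀ = 1 + Nᵀ := by rw [hQ, Matrix.transpose_add, Matrix.transpose_one]
  have hQMQ : Q * M * Qᵀ = Db := by
    have expand : Q * M * Qᵀ = M + (N * M + (M * Nᵀ + N * M * Nᵀ)) := by
      rw [hQ, hQt]; noncomm_ring
    rw [expand, hNMNt, hNM, hMNt, add_zero, ← smul_add, hZF, hF]
    abel
  refine ⟨Q * Pt, ?_, ?_⟩
  · rw [Matrix.det_mul]
    refine ((Matrix.isUnit_iff_isUnit_det Q).1 hQunit).mul ?_
    apply isUnit_of_pr hn1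
    have : pr n Pt.det = P.det := by
      rw [RingHom.map_det, RingHom.mapMatrix_apply, hmap]
    rw [this]; exact hP
  · rw [Matrix.transpose_mul]
    calc Q * Pt * Da * (Ptᵀ * Qᵀ) = Q * (Pt * Da * Ptᵀ) * Qᵀ := by
          simp only [Matrix.mul_assoc]
      _ = Db := by rw [← hM, hQMQ]

end Z2

/-- For `n ≥ 3`, the ring homomorphism `GW(ℤ/2^{n+1}) → GW(ℤ/2ⁿ)` induced by
the canonical projection (sending `[a]` to the class of the image of `a`) is a ring
isomorphism. -/
theorem gw_zmod_two_pow_iso (n : ℕ) (hn : 3 ≤ n) :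
    ∃ ψ : GW (ZMod (2 ^ (n + 1))) →+* GW (ZMod (2 ^ n)),
      (∀ a : (ZMod (2 ^ (n + 1)))ˣ,
        ψ (gw a) =
          gw (Units.map ((ZMod.castHom (pow_dvd_pow 2 n.le_succ) (ZMod (2 ^ n))) :
            ZMod (2 ^ (n + 1)) →* ZMod (2 ^ n)) a)) ∧
      Function.Bijective ψ := by
  classical
  have hn1 : 1 ≤ n := by omega
  set gψ : (Z2.Rr n)ˣ → (Z2.Ss n)ˣ :=
    ⇑(Units.map ((ZMod.castHom (pow_dvd_pow 2 n.le_succ) (ZMod (2 ^ n))) :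
      ZMod (2 ^ (n + 1)) →* ZMod (2 ^ n))) with hgψ
  have hgψcoe : ∀ u : (Z2.Rr n)ˣ, ((gψ u : (Z2.Ss n)ˣ) : Z2.Ss n) = Z2.pr n ↑u :=
    fun u => rfl
  have honeψ : cls (gψ 1) = 1 := by rw [hgψ, map_one]; rfl
  have hmulψ : ∀ u v, cls (gψ (u * v)) = cls (gψ u) * cls (gψ v) := by
    intro u v; rw [hgψ, map_mul]; rfl
  have hrelψ : ∀ x ∈ gwRel (Z2.Rr n), GWP.bigHom gψ honeψ hmulψ x = 0 := by
    rintro x ⟨A, B, P, hP, heq, rfl⟩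
    rw [map_sub, map_sum, map_sum]
    simp only [GWP.bigHom_gen]
    rw [sub_eq_zero]
    refine GWP.rel_zero (P.map (Z2.pr n)) ?_ ?_
    · rw [← RingHom.mapMatrix_apply, ← RingHom.map_det]
      exact hP.map (Z2.pr n)
    · calc (P.map ⇑(Z2.pr n)) * Matrix.diagonal (fun i => ((gψ (A i) : (Z2.Ss n)ˣ) : Z2.Ss n))
            * (P.map ⇑(Z2.pr n)).transpose
          = (P * Matrix.diagonal (fun i => ((A i : (Z2.Rr n)ˣ) : Z2.Rr n)) * P.transpose).map (Z2.pr n) := by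
            rw [Matrix.map_mul (f := Z2.pr n), Matrix.map_mul (f := Z2.pr n),
              Matrix.transpose_map, Matrix.diagonal_map (map_zero (Z2.pr n))]
            have e0 : (fun i => ((gψ (A i) : (Z2.Ss n)ˣ) : Z2.Ss n))
                = fun m => Z2.pr n ((A m : (Z2.Rr n)ˣ) : Z2.Rr n) :=
              funext fun i => hgψcoe (A i)
            rw [e0]

        _ = Matrix.diagonal (fun i => ((gψ (B i) : (Z2.Ss n)ˣ) : Z2.Ss n)) := by
            rw [heq, Matrix.diagonal_map (map_zero (Z2.pr n))]
            exact congrArg Matrix.diagonal (funext fun i => (hgψcoe (B i)).symm)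
  have honeφ : cls (Z2.L hn1 (1 : (Z2.Ss n)ˣ)) = 1 := by
    have h0 : cls (Z2.L hn1 (1 : (Z2.Ss n)ˣ)) = cls (1 : (Z2.Rr n)ˣ) :=
      Z2.cls_eq_of_pr hn (by rw [Z2.pr_L, Units.val_one, Units.val_one, map_one])
    rw [h0]; rfl
  have hmulφ : ∀ u v, cls (Z2.L hn1 (u * v)) = cls (Z2.L hn1 u) * cls (Z2.L hn1 v) := by
    intro u v
    have h0 : cls (Z2.L hn1 (u * v)) = cls (Z2.L hn1 u * Z2.L hn1 v) :=
      Z2.cls_eq_of_pr hn (by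
        rw [Z2.pr_L, Units.val_mul, Units.val_mul, map_mul, Z2.pr_L, Z2.pr_L])
    rw [h0, GWP.cls_mul]
  have hrelφ : ∀ x ∈ gwRel (Z2.Ss n), GWP.bigHom (Z2.L hn1) honeφ hmulφ x = 0 := by
    rintro x ⟨A, B, P, hP, heq, rfl⟩
    rw [map_sub, map_sum, map_sum]
    simp only [GWP.bigHom_gen]
    rw [sub_eq_zero]
    obtain ⟨P', h1, h2⟩ := Z2.key hn A B P hP heq
    exact GWP.rel_zero P' h1 h2
  set ψ := GWP.descend gψ honeψ hmulψ hrelψ with hψ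
  set Φ := GWP.descend (Z2.L hn1) honeφ hmulφ hrelφ with hΦ
  have hcomp1 : ψ.comp Φ = RingHom.id (GW (Z2.Ss n)) := by
    refine GWP.gwHom_ext _ _ (fun s => ?_)
    rw [RingHom.comp_apply, hΦ, GWP.descend_gw, hψ, GWP.descend_gw, RingHom.id_apply]
    congr 1
    ext
    rw [hgψcoe, Z2.pr_L]
  have hcomp2 : Φ.comp ψ = RingHom.id (GW (Z2.Rr n)) := by
    refine GWP.gwHom_ext _ _ (fun a => ?_)
    rw [RingHom.comp_apply, hψ, GWP.descend_gw, hΦ, GWP.descend_gw, RingHom.id_apply]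
    refine GWP.gw_eq_of_cls (Z2.cls_eq_of_pr hn ?_)
    rw [Z2.pr_L, hgψcoe]
  refine ⟨ψ, fun a => GWP.descend_gw _ _ _ _ a, ?_, ?_⟩
  · intro x y hxy
    have e1 := RingHom.congr_fun hcomp2 x
    have e2 := RingHom.congr_fun hcomp2 y
    rw [RingHom.comp_apply, RingHom.id_apply] at e1 e2
    rw [← e1, ← e2, hxy]
  · intro y
    refine ⟨Φ y, ?_⟩
    have := RingHom.congr_fun hcomp1 y
    rwa [RingHom.comp_apply] at this

end
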